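/- arXiv:0905.3879 — 5 statements merged into one kernel-verified Lean document; each statement's English description precedes it below -/
import Mathlib

section
/- Let U₁, U₂, V₁, V₂ be real-valued random variables on a probability space such that U₁ and U₂ have the same distribution, and such that for all i, j ∈ {1,2} the pair (Uᵢ, Vⱼ) is independent. If U₁ + V₁ = U₂ + V₂ almost surely, then U₁ = U₂ almost surely. -/
open MeasureTheory ProbabilityTheory Real

/-- Furstenberg's Problem B (Garbit's Lemma): no integrability assumption needed. -/
theorem furstenberg_problemB
    {Ω : Type*} [MeasurableSpace Ω] (μ : Measure Ω) [IsProbabilityMeasure μ]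
    (U₁ U₂ V₁ V₂ : Ω → ℝ)
    (hU₁ : Measurable U₁) (hU₂ : Measurable U₂)
    (hV₁ : Measurable V₁) (hV₂ : Measurable V₂)
    (hdist : Measure.map U₁ μ = Measure.map U₂ μ)
    (h11 : IndepFun U₁ V₁ μ) (h12 : IndepFun U₁ V₂ μ)
    (h21 : IndepFun U₂ V₁ μ) (h22 : IndepFun U₂ V₂ μ)
    (hsum : (fun ω => U₁ ω + V₁ ω) =ᵐ[μ] fun ω => U₂ ω + V₂ ω) :
    U₁ =ᵐ[μ] U₂ := by
  -- bounded transforms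
  set a₁ : Ω → ℝ := fun ω => arctan (U₁ ω) with ha₁
  set a₂ : Ω → ℝ := fun ω => arctan (U₂ ω) with ha₂
  set b₁ : Ω → ℝ := fun ω => arctan (V₁ ω) with hb₁
  set b₂ : Ω → ℝ := fun ω => arctan (V₂ ω) with hb₂
  have habs : ∀ x : ℝ, |arctan x| ≤ π / 2 := fun x =>
    abs_le.2 ⟨(neg_pi_div_two_lt_arctan x).le, (arctan_lt_pi_div_two x).le⟩
  have hint : ∀ (g : Ω → ℝ), Measurable g →
      Integrable (fun ω => arctan (g ω)) μ := by
    intro g hg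
    refine (integrable_const (π / 2)).mono' hg.arctan.aestronglyMeasurable ?_
    filter_upwards with ω
    simpa [Real.norm_eq_abs] using habs (g ω)
  have hia₁ := hint U₁ hU₁
  have hia₂ := hint U₂ hU₂
  have hib₁ := hint V₁ hV₁
  have hib₂ := hint V₂ hV₂
  -- products are integrable
  have hmul : ∀ (g h : Ω → ℝ), Measurable g → Measurable h →
      Integrable (fun ω => arctan (g ω) * arctan (h ω)) μ := by
    intro g h hg hh
    refine (integrable_const (π / 2 * (π / 2))).mono'
      (hg.arctan.mul hh.arctan).aestronglyMeasurable ?_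
    filter_upwards with ω
    rw [Real.norm_eq_abs, abs_mul]
    exact mul_le_mul (habs _) (habs _) (abs_nonneg _) (by positivity)
  -- factorization via independence
  have hf : ∀ (g h : Ω → ℝ) (hg : Measurable g) (hh : Measurable h),
      IndepFun g h μ →
      ∫ ω, arctan (g ω) * arctan (h ω) ∂μ
        = (∫ ω, arctan (g ω) ∂μ) * ∫ ω, arctan (h ω) ∂μ := by
    intro g h hg hh hind
    exact IndepFun.integral_fun_mul_eq_mul_integral (hind.comp measurable_arctan measurable_arctan)
      (hint g hg).aestronglyMeasurable (hint h hh).aestronglyMeasurable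
  -- equal first moments
  have hEa : ∫ ω, a₁ ω ∂μ = ∫ ω, a₂ ω ∂μ := by
    rw [ha₁, ha₂,
      ← integral_map hU₁.aemeasurable measurable_arctan.aestronglyMeasurable,
      ← integral_map hU₂.aemeasurable measurable_arctan.aestronglyMeasurable, hdist]
  -- the key nonnegative function
  set F : Ω → ℝ := fun ω => (a₁ ω - a₂ ω) * (b₂ ω - b₁ ω) with hF
  have hFint : Integrable F μ := by
    have : F = fun ω => (a₁ ω * b₂ ω - a₁ ω * b₁ ω) - (a₂ ω * b₂ ω - a₂ ω * b₁ ω) := by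
      funext ω; ring
    rw [this]
    exact ((hmul U₁ V₂ hU₁ hV₂).sub (hmul U₁ V₁ hU₁ hV₁)).sub
      ((hmul U₂ V₂ hU₂ hV₂).sub (hmul U₂ V₁ hU₂ hV₁))
  have hFzero : ∫ ω, F ω ∂μ = 0 := by
    have : ∫ ω, F ω ∂μ = ((∫ ω, a₁ ω ∂μ) - ∫ ω, a₂ ω ∂μ)
        * ((∫ ω, b₂ ω ∂μ) - ∫ ω, b₁ ω ∂μ) := by
      have hrw : ∫ ω, F ω ∂μ
          = ∫ ω, ((a₁ ω * b₂ ω - a₁ ω * b₁ ω) - (a₂ ω * b₂ ω - a₂ ω * b₁ ω)) ∂μ :=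
        integral_congr_ae (Filter.Eventually.of_forall fun ω => by simp only [hF]; ring)
      have I12 : Integrable (fun ω => a₁ ω * b₂ ω) μ := hmul U₁ V₂ hU₁ hV₂
      have I11 : Integrable (fun ω => a₁ ω * b₁ ω) μ := hmul U₁ V₁ hU₁ hV₁
      have I22 : Integrable (fun ω => a₂ ω * b₂ ω) μ := hmul U₂ V₂ hU₂ hV₂
      have I21 : Integrable (fun ω => a₂ ω * b₁ ω) μ := hmul U₂ V₁ hU₂ hV₁
      have e12 : ∫ ω, a₁ ω * b₂ ω ∂μ = (∫ ω, a₁ ω ∂μ) * ∫ ω, b₂ ω ∂μ :=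
        hf U₁ V₂ hU₁ hV₂ h12
      have e11 : ∫ ω, a₁ ω * b₁ ω ∂μ = (∫ ω, a₁ ω ∂μ) * ∫ ω, b₁ ω ∂μ :=
        hf U₁ V₁ hU₁ hV₁ h11
      have e22 : ∫ ω, a₂ ω * b₂ ω ∂μ = (∫ ω, a₂ ω ∂μ) * ∫ ω, b₂ ω ∂μ :=
        hf U₂ V₂ hU₂ hV₂ h22
      have e21 : ∫ ω, a₂ ω * b₁ ω ∂μ = (∫ ω, a₂ ω ∂μ) * ∫ ω, b₁ ω ∂μ :=
        hf U₂ V₁ hU₂ hV₁ h21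
      have J1 : Integrable (fun ω => a₁ ω * b₂ ω - a₁ ω * b₁ ω) μ := I12.sub I11
      have J2 : Integrable (fun ω => a₂ ω * b₂ ω - a₂ ω * b₁ ω) μ := I22.sub I21
      rw [hrw, integral_sub J1 J2,
        integral_sub I12 I11, integral_sub I22 I21, e12, e11, e22, e21]
      ring
    rw [this, hEa, sub_self, zero_mul]
  have hFnonneg : 0 ≤ᵐ[μ] F := by
    filter_upwards [hsum] with ω hω
    have hdiff : U₁ ω - U₂ ω = V₂ ω - V₁ ω := by
      have : U₁ ω + V₁ ω = U₂ ω + V₂ ω := hω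
      linarith
    rcases lt_trichotomy (U₁ ω) (U₂ ω) with h | h | h
    · have h1 : a₁ ω - a₂ ω < 0 := sub_neg.2 (arctan_strictMono h)
      have h2 : b₂ ω - b₁ ω < 0 := sub_neg.2 (arctan_strictMono (by linarith))
      exact (mul_pos_of_neg_of_neg h1 h2).le
    · simp [ha₁, ha₂, hF, h]
    · have h1 : 0 < a₁ ω - a₂ ω := sub_pos.2 (arctan_strictMono h)
      have h2 : 0 < b₂ ω - b₁ ω := sub_pos.2 (arctan_strictMono (by linarith))
      exact (mul_pos h1 h2).le
  have hFae : F =ᵐ[μ] 0 :=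
    ((integral_eq_zero_iff_of_nonneg_ae hFnonneg hFint).1 hFzero)
  filter_upwards [hFae, hsum] with ω hω hω'
  have hdiff : U₁ ω - U₂ ω = V₂ ω - V₁ ω := by
    have : U₁ ω + V₁ ω = U₂ ω + V₂ ω := hω'
    linarith
  by_contra hne
  rcases lt_or_gt_of_ne hne with h | h
  · have h1 : a₁ ω - a₂ ω < 0 := sub_neg.2 (arctan_strictMono h)
    have h2 : b₂ ω - b₁ ω < 0 := sub_neg.2 (arctan_strictMono (by linarith))
    have : 0 < F ω := mul_pos_of_neg_of_neg h1 h2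
    simpa [hω] using this
  · have h1 : 0 < a₁ ω - a₂ ω := sub_pos.2 (arctan_strictMono h)
    have h2 : 0 < b₂ ω - b₁ ω := sub_pos.2 (arctan_strictMono (by linarith))
    have : 0 < F ω := mul_pos h1 h2
    simpa [hω] using this
end

section
/- Let U₁, U₂, V₁, V₂ be real-valued random variables on a probability space such that U₁ and U₂ have the same distribution, and such that for all i, j ∈ {1,2} the pair (Uᵢ, Vⱼ) is independent. If U₁ + V₁ = U₂ + V₂ almost surely, then V₁ = V₂ almost surely. -/
open MeasureTheory ProbabilityTheory

theorem furstenberg_problemB_noise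
    {Ω : Type*} [MeasurableSpace Ω] (μ : Measure Ω) [IsProbabilityMeasure μ]
    (U₁ U₂ V₁ V₂ : Ω → ℝ)
    (hU₁ : Measurable U₁) (hU₂ : Measurable U₂)
    (hV₁ : Measurable V₁) (hV₂ : Measurable V₂)
    (hdist : Measure.map U₁ μ = Measure.map U₂ μ)
    (h11 : IndepFun U₁ V₁ μ) (h12 : IndepFun U₁ V₂ μ)
    (h21 : IndepFun U₂ V₁ μ) (h22 : IndepFun U₂ V₂ μ)
    (hsum : (fun ω => U₁ ω + V₁ ω) =ᵐ[μ] fun ω => U₂ ω + V₂ ω) :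
    V₁ =ᵐ[μ] V₂ := by
  classical
  -- the key vanishing statement, for every pair of real thresholds
  have key : ∀ a b : ℝ,
      (fun ω => ((U₁ ⁻¹' Set.Iic a).indicator (1 : Ω → ℝ) ω
            - (U₂ ⁻¹' Set.Iic a).indicator (1 : Ω → ℝ) ω)
          * ((V₂ ⁻¹' Set.Iic b).indicator (1 : Ω → ℝ) ω
            - (V₁ ⁻¹' Set.Iic b).indicator (1 : Ω → ℝ) ω)) =ᵐ[μ] 0 := by
    intro a b
    set A₁ : Set Ω := U₁ ⁻¹' Set.Iic a with hA₁def
    set A₂ : Set Ω := U₂ ⁻¹' Set.Iic a with hA₂def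
    set B₁ : Set Ω := V₁ ⁻¹' Set.Iic b with hB₁def
    set B₂ : Set Ω := V₂ ⁻¹' Set.Iic b with hB₂def
    have mA₁ : MeasurableSet A₁ := hU₁ measurableSet_Iic
    have mA₂ : MeasurableSet A₂ := hU₂ measurableSet_Iic
    have mB₁ : MeasurableSet B₁ := hV₁ measurableSet_Iic
    have mB₂ : MeasurableSet B₂ := hV₂ measurableSet_Iic
    -- products of indicators
    have prod_eq : ∀ (S T : Set Ω),
        (fun ω => S.indicator (1 : Ω → ℝ) ω * T.indicator (1 : Ω → ℝ) ω)
          = (S ∩ T).indicator (1 : Ω → ℝ) := by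
      intro S T
      funext ω
      rw [Set.inter_indicator_one]
      rfl
    have int_prod : ∀ (S T : Set Ω), MeasurableSet S → MeasurableSet T →
        Integrable (fun ω => S.indicator (1 : Ω → ℝ) ω * T.indicator (1 : Ω → ℝ) ω) μ := by
      intro S T hS hT
      rw [prod_eq]
      exact (integrable_const (1 : ℝ)).indicator (hS.inter hT)
    have intgl : ∀ (S T : Set Ω), MeasurableSet S → MeasurableSet T →
        (∫ ω, S.indicator (1 : Ω → ℝ) ω * T.indicator (1 : Ω → ℝ) ω ∂μ)
          = (μ (S ∩ T)).toReal := by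
      intro S T hS hT
      rw [prod_eq]
      exact integral_indicator_one (hS.inter hT)
    -- the four independence identities
    have hI12 : μ (A₁ ∩ B₂) = μ A₁ * μ B₂ :=
      h12.measure_inter_preimage_eq_mul _ _ measurableSet_Iic measurableSet_Iic
    have hI11 : μ (A₁ ∩ B₁) = μ A₁ * μ B₁ :=
      h11.measure_inter_preimage_eq_mul _ _ measurableSet_Iic measurableSet_Iic
    have hI22 : μ (A₂ ∩ B₂) = μ A₂ * μ B₂ :=
      h22.measure_inter_preimage_eq_mul _ _ measurableSet_Iic measurableSet_Iic
    have hI21 : μ (A₂ ∩ B₁) = μ A₂ * μ B₁ :=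
      h21.measure_inter_preimage_eq_mul _ _ measurableSet_Iic measurableSet_Iic
    -- same distribution for U₁, U₂
    have hAA : μ A₁ = μ A₂ := by
      rw [hA₁def, hA₂def, ← Measure.map_apply hU₁ measurableSet_Iic,
        ← Measure.map_apply hU₂ measurableSet_Iic, hdist]
    -- the function is a.e. nonnegative
    have hnonneg : 0 ≤ᵐ[μ]
        (fun ω => (A₁.indicator (1 : Ω → ℝ) ω - A₂.indicator (1 : Ω → ℝ) ω)
          * (B₂.indicator (1 : Ω → ℝ) ω - B₁.indicator (1 : Ω → ℝ) ω)) := by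
      filter_upwards [hsum] with ω hω
      have hω' : U₁ ω + V₁ ω = U₂ ω + V₂ ω := hω
      simp only [Pi.zero_apply, hA₁def, hA₂def, hB₁def, hB₂def, Set.indicator_apply,
        Set.mem_preimage, Set.mem_Iic, Pi.one_apply]
      split_ifs <;> norm_num <;> linarith
    -- the integral vanishes
    have hint : (∫ ω, (A₁.indicator (1 : Ω → ℝ) ω - A₂.indicator (1 : Ω → ℝ) ω)
          * (B₂.indicator (1 : Ω → ℝ) ω - B₁.indicator (1 : Ω → ℝ) ω) ∂μ) = 0 := by
      have expand : (fun ω => (A₁.indicator (1 : Ω → ℝ) ω - A₂.indicator (1 : Ω → ℝ) ω)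
            * (B₂.indicator (1 : Ω → ℝ) ω - B₁.indicator (1 : Ω → ℝ) ω))
          = fun ω => (A₁.indicator (1 : Ω → ℝ) ω * B₂.indicator (1 : Ω → ℝ) ω
              - A₂.indicator (1 : Ω → ℝ) ω * B₂.indicator (1 : Ω → ℝ) ω)
            - (A₁.indicator (1 : Ω → ℝ) ω * B₁.indicator (1 : Ω → ℝ) ω
              - A₂.indicator (1 : Ω → ℝ) ω * B₁.indicator (1 : Ω → ℝ) ω) := by
        funext ω; ring
      have i2 : Integrable (fun ω => A₁.indicator (1 : Ω → ℝ) ω * B₂.indicator (1 : Ω → ℝ) ω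
          - A₂.indicator (1 : Ω → ℝ) ω * B₂.indicator (1 : Ω → ℝ) ω) μ :=
        (int_prod _ _ mA₁ mB₂).sub (int_prod _ _ mA₂ mB₂)
      have i3 : Integrable (fun ω => A₁.indicator (1 : Ω → ℝ) ω * B₁.indicator (1 : Ω → ℝ) ω
          - A₂.indicator (1 : Ω → ℝ) ω * B₁.indicator (1 : Ω → ℝ) ω) μ :=
        (int_prod _ _ mA₁ mB₁).sub (int_prod _ _ mA₂ mB₁)
      rw [expand, integral_sub i2 i3]
      rw [integral_sub (int_prod _ _ mA₁ mB₂) (int_prod _ _ mA₂ mB₂),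
        integral_sub (int_prod _ _ mA₁ mB₁) (int_prod _ _ mA₂ mB₁),
        intgl _ _ mA₁ mB₂, intgl _ _ mA₂ mB₂, intgl _ _ mA₁ mB₁, intgl _ _ mA₂ mB₁,
        hI12, hI11, hI22, hI21, hAA]
      ring
    -- nonnegative + zero integral ⇒ a.e. zero
    have hinteg : Integrable (fun ω => (A₁.indicator (1 : Ω → ℝ) ω - A₂.indicator (1 : Ω → ℝ) ω)
          * (B₂.indicator (1 : Ω → ℝ) ω - B₁.indicator (1 : Ω → ℝ) ω)) μ := by
      have expand : (fun ω => (A₁.indicator (1 : Ω → ℝ) ω - A₂.indicator (1 : Ω → ℝ) ω)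
            * (B₂.indicator (1 : Ω → ℝ) ω - B₁.indicator (1 : Ω → ℝ) ω))
          = fun ω => (A₁.indicator (1 : Ω → ℝ) ω * B₂.indicator (1 : Ω → ℝ) ω
              - A₂.indicator (1 : Ω → ℝ) ω * B₂.indicator (1 : Ω → ℝ) ω)
            - (A₁.indicator (1 : Ω → ℝ) ω * B₁.indicator (1 : Ω → ℝ) ω
              - A₂.indicator (1 : Ω → ℝ) ω * B₁.indicator (1 : Ω → ℝ) ω) := by
        funext ω; ring
      rw [expand]
      exact ((int_prod _ _ mA₁ mB₂).sub (int_prod _ _ mA₂ mB₂)).sub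
        ((int_prod _ _ mA₁ mB₁).sub (int_prod _ _ mA₂ mB₁))
    exact ((integral_eq_zero_iff_of_nonneg_ae hnonneg hinteg).mp hint)
  -- combine over all rational thresholds
  have hall : ∀ᵐ ω ∂μ, ∀ (a b : ℚ),
      ((U₁ ⁻¹' Set.Iic (a : ℝ)).indicator (1 : Ω → ℝ) ω
            - (U₂ ⁻¹' Set.Iic (a : ℝ)).indicator (1 : Ω → ℝ) ω)
          * ((V₂ ⁻¹' Set.Iic (b : ℝ)).indicator (1 : Ω → ℝ) ω
            - (V₁ ⁻¹' Set.Iic (b : ℝ)).indicator (1 : Ω → ℝ) ω) = 0 := by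
    rw [ae_all_iff]
    intro a
    rw [ae_all_iff]
    intro b
    filter_upwards [key (a : ℝ) (b : ℝ)] with ω hω
    simpa using hω
  filter_upwards [hall, hsum] with ω hf hω
  have hω' : U₁ ω + V₁ ω = U₂ ω + V₂ ω := hω
  rcases lt_trichotomy (V₁ ω) (V₂ ω) with hlt | heq | hgt
  · -- V₁ < V₂, hence U₂ < U₁ : pick rationals in between
    exfalso
    have hU : U₂ ω < U₁ ω := by linarith
    obtain ⟨a, ha1, ha2⟩ := exists_rat_btwn hU
    obtain ⟨b, hb1, hb2⟩ := exists_rat_btwn hlt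
    have := hf a b
    simp only [Set.indicator_apply, Set.mem_preimage, Set.mem_Iic, Pi.one_apply] at this
    rw [if_neg (by exact not_le.mpr ha2), if_pos (le_of_lt ha1),
      if_neg (by exact not_le.mpr hb2), if_pos (le_of_lt hb1)] at this
    norm_num at this
  · exact heq
  · -- V₁ > V₂, hence U₁ < U₂
    exfalso
    have hU : U₁ ω < U₂ ω := by linarith
    obtain ⟨a, ha1, ha2⟩ := exists_rat_btwn hU
    obtain ⟨b, hb1, hb2⟩ := exists_rat_btwn hgt
    have := hf a b
    simp only [Set.indicator_apply, Set.mem_preimage, Set.mem_Iic, Pi.one_apply] at this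
    rw [if_pos (le_of_lt ha1), if_neg (by exact not_le.mpr ha2),
      if_pos (le_of_lt hb1), if_neg (by exact not_le.mpr hb2)] at this
    norm_num at this
end

section
/- Let U₁, U₂, V₁, V₂ be integrable real-valued random variables on a probability space such that for all i, j ∈ {1,2} the pair (Uᵢ, Vⱼ) is independent. If U₁ + V₁ = U₂ + V₂ almost surely and E[U₁] = E[U₂], then U₁ = U₂ almost surely and V₁ = V₂ almost surely. -/
open MeasureTheory ProbabilityTheory

/-- Indicator of a level set of a real function. -/
noncomputable def lvl (c : ℝ) : ℝ → ℝ := fun x => if x ≤ c then 1 else 0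

lemma lvl_measurable (c : ℝ) : Measurable (lvl c) := by
  unfold lvl
  exact Measurable.ite (measurableSet_le measurable_id measurable_const)
    measurable_const measurable_const

lemma lvl_bound (c : ℝ) (x : ℝ) : ‖lvl c x‖ ≤ 1 := by
  unfold lvl; split <;> simp

/-- If `E[(Y - X) * 1_{X ≤ c}] = 0` and `E[(Y - X) * 1_{Y ≤ c}] = 0` for all `c`,
then `X = Y` a.e. -/
lemma key_lemma {Ω : Type*} [MeasurableSpace Ω] (μ : Measure Ω) [IsProbabilityMeasure μ]
    (X Y : Ω → ℝ) (hX : Measurable X) (hY : Measurable Y)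
    (hiX : Integrable X μ) (hiY : Integrable Y μ)
    (h1 : ∀ c : ℝ, ∫ ω, lvl c (X ω) * (Y ω - X ω) ∂μ = 0)
    (h2 : ∀ c : ℝ, ∫ ω, lvl c (Y ω) * (Y ω - X ω) ∂μ = 0) :
    X =ᵐ[μ] Y := by
  have hInt : ∀ c : ℝ,
      Integrable (fun ω => (lvl c (X ω) - lvl c (Y ω)) * (Y ω - X ω)) μ := by
    intro c
    apply Integrable.bdd_mul (c := 2) (hiY.sub hiX)
    · exact (((lvl_measurable c).comp hX).sub ((lvl_measurable c).comp hY)).aestronglyMeasurable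
    · refine Filter.Eventually.of_forall (fun ω => ?_)
      calc ‖lvl c (X ω) - lvl c (Y ω)‖ ≤ ‖lvl c (X ω)‖ + ‖lvl c (Y ω)‖ := norm_sub_le _ _
        _ ≤ 1 + 1 := add_le_add (lvl_bound c _) (lvl_bound c _)
        _ = 2 := by norm_num
  have hIntX : ∀ c : ℝ, Integrable (fun ω => lvl c (X ω) * (Y ω - X ω)) μ := by
    intro c
    apply Integrable.bdd_mul (hiY.sub hiX)
    · exact ((lvl_measurable c).comp hX).aestronglyMeasurable
    · exact (Filter.Eventually.of_forall (fun ω => lvl_bound c _))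
  have hIntY : ∀ c : ℝ, Integrable (fun ω => lvl c (Y ω) * (Y ω - X ω)) μ := by
    intro c
    apply Integrable.bdd_mul (hiY.sub hiX)
    · exact ((lvl_measurable c).comp hY).aestronglyMeasurable
    · exact (Filter.Eventually.of_forall (fun ω => lvl_bound c _))
  have hnonneg : ∀ c : ℝ, ∀ ω, 0 ≤ (lvl c (X ω) - lvl c (Y ω)) * (Y ω - X ω) := by
    intro c ω
    unfold lvl
    rcases le_or_gt (X ω) c with hx | hx <;> rcases le_or_gt (Y ω) c with hy | hy
    · rw [if_pos hx, if_pos hy]; simp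
    · rw [if_pos hx, if_neg (not_le.mpr hy)]; nlinarith
    · rw [if_neg (not_le.mpr hx), if_pos hy]; nlinarith
    · rw [if_neg (not_le.mpr hx), if_neg (not_le.mpr hy)]; simp
  have hzero : ∀ c : ℝ, ∫ ω, (lvl c (X ω) - lvl c (Y ω)) * (Y ω - X ω) ∂μ = 0 := by
    intro c
    have : ∀ ω, (lvl c (X ω) - lvl c (Y ω)) * (Y ω - X ω)
        = lvl c (X ω) * (Y ω - X ω) - lvl c (Y ω) * (Y ω - X ω) := by
      intro ω; ring
    simp only [this]
    rw [integral_sub (hIntX c) (hIntY c), h1 c, h2 c, sub_zero]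
  have hae : ∀ q : ℚ, ∀ᵐ ω ∂μ,
      (lvl (q : ℝ) (X ω) - lvl (q : ℝ) (Y ω)) * (Y ω - X ω) = 0 := by
    intro q
    have := (integral_eq_zero_iff_of_nonneg (fun ω => hnonneg (q : ℝ) ω)
      (hInt (q : ℝ))).mp (hzero (q : ℝ))
    filter_upwards [this] with ω hω using hω
  have hall : ∀ᵐ ω ∂μ, ∀ q : ℚ,
      (lvl (q : ℝ) (X ω) - lvl (q : ℝ) (Y ω)) * (Y ω - X ω) = 0 :=
    ae_all_iff.mpr hae
  filter_upwards [hall] with ω hω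
  by_contra hne
  rcases lt_or_gt_of_ne hne with hlt | hlt
  · obtain ⟨q, hq1, hq2⟩ := exists_rat_btwn hlt
    have := hω q
    unfold lvl at this
    rw [if_pos hq1.le, if_neg (not_le.mpr hq2)] at this
    nlinarith
  · obtain ⟨q, hq1, hq2⟩ := exists_rat_btwn hlt
    have := hω q
    unfold lvl at this
    rw [if_neg (not_le.mpr hq2), if_pos hq1.le] at this
    nlinarith

/-- For independent `U`, `V` with `U` integrable,
`E[1_{V ≤ c} U] = E[U] * E[1_{V ≤ c}]`. -/
lemma indep_int {Ω : Type*} [MeasurableSpace Ω] (μ : Measure Ω) [IsProbabilityMeasure μ]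
    (U V : Ω → ℝ) (hU : Measurable U) (hV : Measurable V) (hiU : Integrable U μ)
    (h : IndepFun U V μ) (c : ℝ) :
    ∫ ω, lvl c (V ω) * U ω ∂μ = (∫ ω, lvl c (V ω) ∂μ) * ∫ ω, U ω ∂μ := by
  have hInd : IndepFun (fun ω => lvl c (V ω)) U μ :=
    (h.comp measurable_id (lvl_measurable c)).symm
  have hIntL : Integrable (fun ω => lvl c (V ω)) μ := by
    apply Integrable.bdd_mul (integrable_const (1 : ℝ))
      ((lvl_measurable c).comp hV).aestronglyMeasurable (Filter.Eventually.of_forall (fun ω => lvl_bound c _)) |>.congr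
    filter_upwards with ω; simp
  exact hInd.integral_fun_mul_eq_mul_integral hIntL.aestronglyMeasurable hiU.aestronglyMeasurable

/-- Furstenberg's Lemma I.3: the integrable case. -/
theorem furstenberg_lemma_integrable
    {Ω : Type*} [MeasurableSpace Ω] (μ : Measure Ω) [IsProbabilityMeasure μ]
    (U₁ U₂ V₁ V₂ : Ω → ℝ)
    (hU₁ : Measurable U₁) (hU₂ : Measurable U₂)
    (hV₁ : Measurable V₁) (hV₂ : Measurable V₂)
    (hintU₁ : Integrable U₁ μ) (hintU₂ : Integrable U₂ μ)
    (hintV₁ : Integrable V₁ μ) (hintV₂ : Integrable V₂ μ)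
    (h11 : IndepFun U₁ V₁ μ) (h12 : IndepFun U₁ V₂ μ)
    (h21 : IndepFun U₂ V₁ μ) (h22 : IndepFun U₂ V₂ μ)
    (hsum : (fun ω => U₁ ω + V₁ ω) =ᵐ[μ] fun ω => U₂ ω + V₂ ω)
    (hexp : ∫ ω, U₁ ω ∂μ = ∫ ω, U₂ ω ∂μ) :
    U₁ =ᵐ[μ] U₂ ∧ V₁ =ᵐ[μ] V₂ := by
  -- `V₂ - V₁ = U₁ - U₂` a.e.
  have hdiff : (fun ω => V₂ ω - V₁ ω) =ᵐ[μ] fun ω => U₁ ω - U₂ ω := by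
    filter_upwards [hsum] with ω hω
    have : U₁ ω + V₁ ω = U₂ ω + V₂ ω := hω
    linarith
  -- key integrals
  have hkey : ∀ (W : Ω → ℝ), Measurable W →
      IndepFun U₁ W μ → IndepFun U₂ W μ →
      ∀ c : ℝ, ∫ ω, lvl c (W ω) * (V₂ ω - V₁ ω) ∂μ = 0 := by
    intro W hW hind1 hind2 c
    have heq : (fun ω => lvl c (W ω) * (V₂ ω - V₁ ω))
        =ᵐ[μ] fun ω => lvl c (W ω) * U₁ ω - lvl c (W ω) * U₂ ω := by
      filter_upwards [hdiff] with ω hω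
      have : V₂ ω - V₁ ω = U₁ ω - U₂ ω := hω
      rw [this]; ring
    rw [integral_congr_ae heq]
    have hI1 : Integrable (fun ω => lvl c (W ω) * U₁ ω) μ := by
      apply Integrable.bdd_mul hintU₁ ((lvl_measurable c).comp hW).aestronglyMeasurable
        (Filter.Eventually.of_forall (fun ω => lvl_bound c _))
    have hI2 : Integrable (fun ω => lvl c (W ω) * U₂ ω) μ := by
      apply Integrable.bdd_mul hintU₂ ((lvl_measurable c).comp hW).aestronglyMeasurable
        (Filter.Eventually.of_forall (fun ω => lvl_bound c _))
    rw [integral_sub hI1 hI2,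
      indep_int μ U₁ W hU₁ hW hintU₁ hind1 c,
      indep_int μ U₂ W hU₂ hW hintU₂ hind2 c,
      hexp, sub_self]
  have hV : V₁ =ᵐ[μ] V₂ := by
    apply key_lemma μ V₁ V₂ hV₁ hV₂ hintV₁ hintV₂
    · exact hkey V₁ hV₁ h11 h21
    · exact hkey V₂ hV₂ h12 h22
  refine ⟨?_, hV⟩
  filter_upwards [hsum, hV] with ω h1 h2
  have : U₁ ω + V₁ ω = U₂ ω + V₂ ω := h1
  linarith
end

section
/- Let U₁, U₂, V₁, V₂ be real-valued random variables on a probability space such that U₁ and U₂ have the same distribution, such that for all i, j ∈ {1,2} the pair (Uᵢ, Vⱼ) is independent, and such that U₁ + V₁ = U₂ + V₂ almost surely. For n ≥ 1, let φₙ : ℝ → ℝ be the truncation φₙ(x) = n if x > n, φₙ(x) = x if −n ≤ x ≤ n, and φₙ(x) = −n if x < −n. Then for every n ≥ 1, the random variable Hₙ = (φₙ(U₁) − φₙ(U₂)) · (φₙ(V₂) − φₙ(V₁)) satisfies Hₙ = 0 almost surely. -/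
open MeasureTheory ProbabilityTheory

theorem truncated_product_ae_zero
    {Ω : Type*} [MeasurableSpace Ω] (μ : Measure Ω) [IsProbabilityMeasure μ]
    (U₁ U₂ V₁ V₂ : Ω → ℝ)
    (hU₁ : Measurable U₁) (hU₂ : Measurable U₂)
    (hV₁ : Measurable V₁) (hV₂ : Measurable V₂)
    (hdist : Measure.map U₁ μ = Measure.map U₂ μ)
    (h11 : IndepFun U₁ V₁ μ) (h12 : IndepFun U₁ V₂ μ)
    (h21 : IndepFun U₂ V₁ μ) (h22 : IndepFun U₂ V₂ μ)
    (hsum : (fun ω => U₁ ω + V₁ ω) =ᵐ[μ] fun ω => U₂ ω + V₂ ω)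
    (φ : ℕ → ℝ → ℝ) (hφ : ∀ n x, φ n x = max (-(n : ℝ)) (min (n : ℝ) x)) :
    ∀ n : ℕ, 1 ≤ n →
      (fun ω => (φ n (U₁ ω) - φ n (U₂ ω)) * (φ n (V₂ ω) - φ n (V₁ ω)))
        =ᵐ[μ] fun _ => (0 : ℝ) := by
  intro n hn
  set f : ℝ → ℝ := fun x => max (-(n : ℝ)) (min (n : ℝ) x) with hf_def
  have hφf : ∀ x, φ n x = f x := fun x => hφ n x
  have hfmono : Monotone f := fun a b hab =>
    max_le_max le_rfl (min_le_min le_rfl hab)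
  have hfmeas : Measurable f :=
    measurable_const.max (measurable_const.min measurable_id)
  have hfbound : ∀ x, ‖f x‖ ≤ (n : ℝ) := by
    intro x
    have hn0 : (0 : ℝ) ≤ n := Nat.cast_nonneg n
    rw [Real.norm_eq_abs, abs_le]
    constructor
    · exact le_max_left _ _
    · exact max_le (by linarith) (min_le_left _ _)
  -- integrability of compositions
  have hint : ∀ (W : Ω → ℝ), Measurable W → Integrable (fun ω => f (W ω)) μ := by
    intro W hW
    refine Integrable.mono' (integrable_const (n : ℝ)) ((hfmeas.comp hW).aestronglyMeasurable) ?_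
    exact Filter.Eventually.of_forall fun ω => hfbound _
  have hiU₁ := hint U₁ hU₁
  have hiU₂ := hint U₂ hU₂
  have hiV₁ := hint V₁ hV₁
  have hiV₂ := hint V₂ hV₂
  -- equal expectations
  have hEU : ∫ ω, f (U₁ ω) ∂μ = ∫ ω, f (U₂ ω) ∂μ := by
    rw [← integral_map hU₁.aemeasurable hfmeas.aestronglyMeasurable, hdist,
      integral_map hU₂.aemeasurable hfmeas.aestronglyMeasurable]
  -- independence of compositions
  have i11 : IndepFun (fun ω => f (U₁ ω)) (fun ω => f (V₁ ω)) μ := h11.comp hfmeas hfmeas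
  have i12 : IndepFun (fun ω => f (U₁ ω)) (fun ω => f (V₂ ω)) μ := h12.comp hfmeas hfmeas
  have i21 : IndepFun (fun ω => f (U₂ ω)) (fun ω => f (V₁ ω)) μ := h21.comp hfmeas hfmeas
  have i22 : IndepFun (fun ω => f (U₂ ω)) (fun ω => f (V₂ ω)) μ := h22.comp hfmeas hfmeas
  -- the function
  set g : Ω → ℝ := fun ω => (f (U₁ ω) - f (U₂ ω)) * (f (V₂ ω) - f (V₁ ω)) with hg_def
  have hg_nonneg : 0 ≤ᵐ[μ] g := by
    filter_upwards [hsum] with ω hω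
    have hkey : U₁ ω - U₂ ω = V₂ ω - V₁ ω := by linarith
    rcases le_total (U₂ ω) (U₁ ω) with h | h
    · have hV : V₁ ω ≤ V₂ ω := by linarith
      exact mul_nonneg (sub_nonneg.mpr (hfmono h)) (sub_nonneg.mpr (hfmono hV))
    · have hV : V₂ ω ≤ V₁ ω := by linarith
      have := mul_nonneg (neg_nonneg.mpr (sub_nonpos.mpr (hfmono h)))
        (neg_nonneg.mpr (sub_nonpos.mpr (hfmono hV)))
      rwa [neg_mul_neg] at this
  have hg_int : Integrable g μ := by
    refine Integrable.mono' (integrable_const ((2 * n : ℝ) * (2 * n))) ?_ ?_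
    · exact (((hfmeas.comp hU₁).sub (hfmeas.comp hU₂)).mul
        ((hfmeas.comp hV₂).sub (hfmeas.comp hV₁))).aestronglyMeasurable
    · refine Filter.Eventually.of_forall fun ω => ?_
      have b1 : ‖f (U₁ ω) - f (U₂ ω)‖ ≤ 2 * n := by
        calc ‖f (U₁ ω) - f (U₂ ω)‖ ≤ ‖f (U₁ ω)‖ + ‖f (U₂ ω)‖ := norm_sub_le _ _
        _ ≤ 2 * n := by have := hfbound (U₁ ω); have := hfbound (U₂ ω); linarith
      have b2 : ‖f (V₂ ω) - f (V₁ ω)‖ ≤ 2 * n := by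
        calc ‖f (V₂ ω) - f (V₁ ω)‖ ≤ ‖f (V₂ ω)‖ + ‖f (V₁ ω)‖ := norm_sub_le _ _
        _ ≤ 2 * n := by have := hfbound (V₂ ω); have := hfbound (V₁ ω); linarith
      calc ‖g ω‖ = ‖f (U₁ ω) - f (U₂ ω)‖ * ‖f (V₂ ω) - f (V₁ ω)‖ := norm_mul _ _
      _ ≤ (2 * n) * (2 * n) := by
        exact mul_le_mul b1 b2 (norm_nonneg _) (by positivity)
  have hg_integral : ∫ ω, g ω ∂μ = 0 := by
    have e11 : ∫ ω, f (U₁ ω) * f (V₁ ω) ∂μ = (∫ ω, f (U₁ ω) ∂μ) * ∫ ω, f (V₁ ω) ∂μ :=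
      i11.integral_fun_mul_eq_mul_integral hiU₁.aestronglyMeasurable hiV₁.aestronglyMeasurable
    have e12 : ∫ ω, f (U₁ ω) * f (V₂ ω) ∂μ = (∫ ω, f (U₁ ω) ∂μ) * ∫ ω, f (V₂ ω) ∂μ :=
      i12.integral_fun_mul_eq_mul_integral hiU₁.aestronglyMeasurable hiV₂.aestronglyMeasurable
    have e21 : ∫ ω, f (U₂ ω) * f (V₁ ω) ∂μ = (∫ ω, f (U₂ ω) ∂μ) * ∫ ω, f (V₁ ω) ∂μ :=
      i21.integral_fun_mul_eq_mul_integral hiU₂.aestronglyMeasurable hiV₁.aestronglyMeasurable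
    have e22 : ∫ ω, f (U₂ ω) * f (V₂ ω) ∂μ = (∫ ω, f (U₂ ω) ∂μ) * ∫ ω, f (V₂ ω) ∂μ :=
      i22.integral_fun_mul_eq_mul_integral hiU₂.aestronglyMeasurable hiV₂.aestronglyMeasurable
    have hexp : g = fun ω => f (U₁ ω) * f (V₂ ω) - f (U₁ ω) * f (V₁ ω)
        - f (U₂ ω) * f (V₂ ω) + f (U₂ ω) * f (V₁ ω) := by
      funext ω; ring
    rw [hexp]
    rw [integral_add, integral_sub, integral_sub]
    · rw [e11, e12, e21, e22, hEU]; ring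
    · exact (i12.integrable_mul hiU₁ hiV₂)
    · exact (i11.integrable_mul hiU₁ hiV₁)
    · exact ((i12.integrable_mul hiU₁ hiV₂).sub (i11.integrable_mul hiU₁ hiV₁))
    · exact (i22.integrable_mul hiU₂ hiV₂)
    · exact (((i12.integrable_mul hiU₁ hiV₂).sub (i11.integrable_mul hiU₁ hiV₁)).sub
        (i22.integrable_mul hiU₂ hiV₂))
    · exact (i21.integrable_mul hiU₂ hiV₁)
  have hg0 : g =ᵐ[μ] 0 :=
    (integral_eq_zero_iff_of_nonneg_ae hg_nonneg hg_int).mp hg_integral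
  have : (fun ω => (φ n (U₁ ω) - φ n (U₂ ω)) * (φ n (V₂ ω) - φ n (V₁ ω))) = g := by
    funext ω; simp only [hφf, hg_def]
  rw [this]
  exact hg0
end

section
/- Suppose that for every quadruple of real-valued random variables Z₁, Z₂, W₁, W₂ on a probability space with Z₁ distributed as Z₂ and W₁ distributed as W₂, the almost-sure inequality Z₁ + W₁ ≤ Z₂ + W₂ implies Z₁ + W₁ = Z₂ + W₂ almost surely. Then for every quadruple of real-valued random variables U₁, U₂, V₁, V₂ on a probability space such that U₁ and U₂ have the same distribution and each pair (Uᵢ, Vⱼ), i, j ∈ {1,2}, is independent, the almost-sure equality U₁ + V₁ = U₂ + V₂ implies U₁ = U₂ almost surely. -/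
open MeasureTheory ProbabilityTheory

private lemma map_add_indep {Ω : Type} [MeasurableSpace Ω] (μ : Measure Ω)
    [IsProbabilityMeasure μ] (X Y : Ω → ℝ) (hX : Measurable X) (hY : Measurable Y)
    (h : IndepFun X Y μ) :
    μ.map (fun ω => X ω + Y ω)
      = ((μ.map X).prod (μ.map Y)).map (fun p : ℝ × ℝ => p.1 + p.2) := by
  rw [← (indepFun_iff_map_prod_eq_prod_map_map hX.aemeasurable hY.aemeasurable).mp h,
    Measure.map_map (g := fun p : ℝ × ℝ => p.1 + p.2) (measurable_fst.add measurable_snd) (hX.prodMk hY)]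
  rfl

theorem problemC_implies_problemB
    (hC : ∀ (Ω : Type) [MeasurableSpace Ω] (μ : Measure Ω) [IsProbabilityMeasure μ]
        (Z₁ Z₂ W₁ W₂ : Ω → ℝ),
        Measurable Z₁ → Measurable Z₂ → Measurable W₁ → Measurable W₂ →
        Measure.map Z₁ μ = Measure.map Z₂ μ →
        Measure.map W₁ μ = Measure.map W₂ μ →
        (∀ᵐ ω ∂μ, Z₁ ω + W₁ ω ≤ Z₂ ω + W₂ ω) →
        (fun ω => Z₁ ω + W₁ ω) =ᵐ[μ] fun ω => Z₂ ω + W₂ ω) :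
    ∀ (Ω : Type) [MeasurableSpace Ω] (μ : Measure Ω) [IsProbabilityMeasure μ]
      (U₁ U₂ V₁ V₂ : Ω → ℝ),
      Measurable U₁ → Measurable U₂ → Measurable V₁ → Measurable V₂ →
      Measure.map U₁ μ = Measure.map U₂ μ →
      IndepFun U₁ V₁ μ → IndepFun U₁ V₂ μ → IndepFun U₂ V₁ μ → IndepFun U₂ V₂ μ →
      ((fun ω => U₁ ω + V₁ ω) =ᵐ[μ] fun ω => U₂ ω + V₂ ω) →
      U₁ =ᵐ[μ] U₂ := by
  intro Ω _ μ _ U₁ U₂ V₁ V₂ hU₁ hU₂ hV₁ hV₂ hmap h11 h12 h21 h22 heq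
  -- distributional identities
  have e1 : μ.map (fun ω => U₁ ω + V₁ ω) = μ.map (fun ω => U₂ ω + V₂ ω) :=
    Measure.map_congr heq
  have e2 : μ.map (fun ω => U₁ ω + V₁ ω) = μ.map (fun ω => U₂ ω + V₁ ω) := by
    rw [map_add_indep μ U₁ V₁ hU₁ hV₁ h11, map_add_indep μ U₂ V₁ hU₂ hV₁ h21, hmap]
  have e3 : μ.map (fun ω => U₁ ω + V₂ ω) = μ.map (fun ω => U₂ ω + V₂ ω) := by
    rw [map_add_indep μ U₁ V₂ hU₁ hV₂ h12, map_add_indep μ U₂ V₂ hU₂ hV₂ h22, hmap]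
  have hA : μ.map (fun ω => U₁ ω + V₁ ω) = μ.map (fun ω => U₁ ω + V₂ ω) := by
    rw [e1, ← e3]
  have hB : μ.map (fun ω => U₂ ω + V₂ ω) = μ.map (fun ω => U₂ ω + V₁ ω) := by
    rw [← e1, e2]
  -- lift to squares
  have hsq : Measurable fun x : ℝ => x ^ 2 := measurable_id.pow_const 2
  have msq : ∀ (f : Ω → ℝ), Measurable f →
      μ.map (fun ω => f ω ^ 2) = (μ.map f).map (fun x => x ^ 2) := by
    intro f hf
    rw [Measure.map_map hsq hf]; rfl
  have hAsq : μ.map (fun ω => (U₁ ω + V₁ ω) ^ 2)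
      = μ.map (fun ω => (U₁ ω + V₂ ω) ^ 2) := by
    rw [msq (fun ω => U₁ ω + V₁ ω) (hU₁.add hV₁), msq (fun ω => U₁ ω + V₂ ω) (hU₁.add hV₂), hA]
  have hBsq : μ.map (fun ω => (U₂ ω + V₂ ω) ^ 2)
      = μ.map (fun ω => (U₂ ω + V₁ ω) ^ 2) := by
    rw [msq (fun ω => U₂ ω + V₂ ω) (hU₂.add hV₂), msq (fun ω => U₂ ω + V₁ ω) (hU₂.add hV₁), hB]
  have hle : ∀ᵐ ω ∂μ, (U₁ ω + V₁ ω) ^ 2 + (U₂ ω + V₂ ω) ^ 2 ≤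
      (U₁ ω + V₂ ω) ^ 2 + (U₂ ω + V₁ ω) ^ 2 := by
    filter_upwards [heq] with ω h

    nlinarith [sq_nonneg (U₁ ω + V₂ ω - U₂ ω - V₁ ω)]
  have key := hC Ω μ (fun ω => (U₁ ω + V₁ ω) ^ 2) (fun ω => (U₁ ω + V₂ ω) ^ 2)
    (fun ω => (U₂ ω + V₂ ω) ^ 2) (fun ω => (U₂ ω + V₁ ω) ^ 2)
    ((hU₁.add hV₁).pow_const 2) ((hU₁.add hV₂).pow_const 2)
    ((hU₂.add hV₂).pow_const 2) ((hU₂.add hV₁).pow_const 2)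
    hAsq hBsq hle
  filter_upwards [heq, key] with ω h hk

  have h0 : (U₁ ω - U₂ ω) ^ 2 = 0 := by
    linear_combination (U₁ ω - U₂ ω) * h - (1/2 : ℝ) * hk
  have := pow_eq_zero_iff (n := 2) (by norm_num) |>.mp h0
  linarith
end
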